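/- arXiv:1112.5772 — 4 statements merged into one kernel-verified Lean document; each statement's English description precedes it below -/
import Mathlib

section
/- If μ is a cardinal with cofinality cf(μ) = λ where λ is a regular infinite cardinal, then the strong polarized relation fails: there exists a coloring c : μ × λ → 2 such that for all A ⊆ μ with |A| = μ and B ⊆ λ with |B| = λ, the restriction of c to A × B is not constant. -/
open Cardinal Set

noncomputable section

/-- The canonical type of cardinality `c`: the order type of `c.ord`. -/
abbrev OT (c : Cardinal) : Type _ := c.ord.ToType

/-- `S` splits `B` (as subsets of a set of size `lam`). -/
def Splits (lam : Cardinal) (S B : Set (OT lam)) : Prop :=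
  #(↥(S ∩ B)) = lam ∧ #(↥(B \ S)) = lam

/-- A splitting family on `lam`. -/
def IsSplittingFamily (lam : Cardinal) (F : Set (Set (OT lam))) : Prop :=
  ∀ B : Set (OT lam), #B = lam → ∃ S ∈ F, Splits lam S B

/-- The splitting number `𝔰_lam`. -/
def splittingNumber (lam : Cardinal) : Cardinal :=
  sInf { κ | ∃ F : Set (Set (OT lam)), #F = κ ∧ IsSplittingFamily lam F }

/-- An unreaped family on `lam`. -/
def IsUnreaped (lam : Cardinal) (F : Set (Set (OT lam))) : Prop :=
  (∀ A ∈ F, #A = lam) ∧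
  ¬ ∃ S : Set (OT lam), #S = lam ∧ ∀ A ∈ F, Splits lam S A

/-- The reaping number `𝔯_lam`. -/
def reapingNumber (lam : Cardinal) : Cardinal :=
  sInf { κ | ∃ F : Set (Set (OT lam)), #F = κ ∧ IsUnreaped lam F }

/-- The strong polarized relation `(μ, lam) → (μ, lam)^{1,1}_2`. -/
def StrongPolarized (μ lam : Cardinal) : Prop :=
  ∀ c : OT μ → OT lam → Fin 2,
    ∃ (A : Set (OT μ)) (B : Set (OT lam)) (i : Fin 2),
      #A = μ ∧ #B = lam ∧ ∀ α ∈ A, ∀ β ∈ B, c α β = i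

end

lemma mk_Iic_lt_of_aleph0_le (c : Cardinal) (hc : ℵ₀ ≤ c) (x : c.ord.ToType) :
    #(Set.Iic x) < c := by
  have h1 : #(Set.Iio x) < c := Cardinal.mk_Iio_ord_toType x
  have h2 : (Set.Iic x) = insert x (Set.Iio x) := by
    ext y; simp [le_iff_lt_or_eq, or_comm]
  rw [h2]
  calc #(insert x (Set.Iio x) : Set _) ≤ #(Set.Iio x) + 1 := Cardinal.mk_insert_le
    _ < c := Cardinal.add_lt_of_lt hc h1 (one_lt_aleph0.trans_le hc)

/-- if `cf μ = lam` with `lam` regular infinite, the strong polarized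
relation fails: some coloring has no monochromatic full-size rectangle. -/
theorem stmt0 (μ lam : Cardinal) (hlam : lam.IsRegular) (hcf : μ.ord.cof = lam) :
    ∃ c : OT μ → OT lam → Fin 2,
      ∀ (A : Set (OT μ)) (B : Set (OT lam)), #A = μ → #B = lam →
        ¬ ∃ i : Fin 2, ∀ α ∈ A, ∀ β ∈ B, c α β = i := by
  have hlamle : lam ≤ μ := by rw [← hcf]; exact Ordinal.cof_ord_le μ
  have hμinf : ℵ₀ ≤ μ := hlam.aleph0_le.trans hlamle
  have hIicμ : ∀ x : OT μ, #(Set.Iic x) < μ := mk_Iic_lt_of_aleph0_le μ hμinf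
  have hIiclam : ∀ x : OT lam, #(Set.Iic x) < lam :=
    mk_Iic_lt_of_aleph0_le lam hlam.aleph0_le
  obtain ⟨S, hSunb, hScard⟩ := Order.cof_eq (OT μ)
  rw [Ordinal.cof_toType, hcf] at hScard
  obtain ⟨e⟩ : Nonempty (OT lam ≃ ↥S) := by
    rw [← Cardinal.eq, Cardinal.mk_ord_toType, hScard]
  choose s hsS hs using fun α : OT μ => hSunb α
  set ξ : OT μ → OT lam := fun α => e.symm ⟨s α, hsS α⟩ with hξ
  have hkey : ∀ α, α ≤ (e (ξ α) : OT μ) := by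
    intro α
    simp only [hξ, Equiv.apply_symm_apply]
    exact hs α
  refine ⟨fun α β => if β ≤ ξ α then 0 else 1, ?_⟩
  rintro A B hA hB ⟨i, hi⟩
  have hBunb : ∀ γ : OT lam, ∃ β ∈ B, γ < β := by
    intro γ
    by_contra h
    push_neg at h
    have hsub : B ⊆ Set.Iic γ := fun β hβ => h β hβ
    have := (Cardinal.mk_le_mk_of_subset hsub).trans_lt (hIiclam γ)
    rw [hB] at this
    exact this.false
  have hAunb : ∀ γ : OT lam, ∃ α ∈ A, γ ≤ ξ α := by
    intro γ
    by_contra h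
    push_neg at h
    have hsub : A ⊆ ⋃ δ : Set.Iio γ, Set.Iic (e δ.1 : OT μ) := by
      intro α hα
      exact Set.mem_iUnion.2 ⟨⟨ξ α, h α hα⟩, hkey α⟩
    have h1 : #A ≤ #(Set.Iio γ) * ⨆ δ : Set.Iio γ, #(Set.Iic (e δ.1 : OT μ)) :=
      (Cardinal.mk_le_mk_of_subset hsub).trans (Cardinal.mk_iUnion_le _)
    have h2 : (⨆ δ : Set.Iio γ, #(Set.Iic (e δ.1 : OT μ))) < μ := by
      refine Ordinal.iSup_lt ?_ (fun δ => hIicμ _)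
      rw [hcf]; exact (Cardinal.mk_Iio_ord_toType γ)
    have h3 : #(Set.Iio γ) * (⨆ δ : Set.Iio γ, #(Set.Iic (e δ.1 : OT μ))) < μ :=
      Cardinal.mul_lt_of_lt hμinf ((Cardinal.mk_Iio_ord_toType γ).trans_le hlamle) h2
    rw [hA] at h1
    exact (h1.trans_lt h3).false
  obtain ⟨β₀, hβ₀⟩ : B.Nonempty := by
    rw [← Set.nonempty_coe_sort, ← Cardinal.mk_ne_zero_iff, hB]
    exact hlam.pos.ne'
  obtain ⟨α₀, hα₀, hle⟩ := hAunb β₀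
  obtain ⟨β₁, hβ₁, hlt⟩ := hBunb (ξ α₀)
  have h0 := hi α₀ hα₀ β₀ hβ₀
  have h1 := hi α₀ hα₀ β₁ hβ₁
  simp only [if_pos hle] at h0
  simp only [if_neg (not_le.mpr hlt)] at h1
  rw [← h0] at h1
  exact absurd h1 (by decide)
end

section
/- Let λ be a regular infinite cardinal and let μ be a cardinal with λ < μ < 𝔰_λ and cf(μ) ≠ λ. Then the strong polarized relation (μ,λ) → (μ,λ)^{1,1}_2 holds: for every coloring c : μ × λ → 2 there exist H₀ ⊆ μ with |H₀| = μ and H₁ ⊆ λ with |H₁| = λ such that c is constant on H₀ × H₁. -/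
open Cardinal Set

section Helpers
universe u
variable {lam : Cardinal.{u}}

instance instIsWellOrderToTypeLT (o : Ordinal) : IsWellOrder o.ToType (· < ·) := isWellOrder_lt

lemma fin2_cases : ∀ x : Fin 2, x = 0 ∨ x = 1 := by decide
lemma fin2_ne (i x : Fin 2) (h : x ≠ i) : x = 1 - i := by revert i x; decide

lemma bdd_of_mk_lt (hlam : lam.IsRegular) {S : Set (OT lam)} (h : #S < lam) :
    ∃ ξ : OT lam, ∀ β ∈ S, β ≤ ξ := by
  have hb : Set.Bounded (· < ·) S := by
    obtain ⟨x, hx⟩ := not_isCofinal_iff.1 (fun hc => (Ordinal.lt_cof_type hc).not_gt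
      (by rw [Ordinal.cof_toType, hlam.cof_eq]; exact h))
    exact ⟨x, hx⟩
  obtain ⟨a, ha⟩ := hb
  exact ⟨a, fun b hb => (ha b hb).le⟩

lemma mk_Iic_lt (hlam : lam.IsRegular) (ξ : OT lam) : #(Set.Iic ξ) < lam := by
  have h1 : #(Set.Iio ξ) < lam := by
    have h := Ordinal.typein_lt_type ((· < ·) : OT lam → OT lam → Prop) ξ
    rw [Ordinal.type_toType] at h
    have h2 := Cardinal.lt_ord.mp h
    rw [Ordinal.card_typein] at h2
    exact h2
  have hsub : Set.Iic ξ ⊆ Set.Iio ξ ∪ {ξ} := by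
    intro β hβ
    rcases lt_or_eq_of_le (Set.mem_Iic.mp hβ) with h | h
    · exact Or.inl h
    · exact Or.inr (by simp [h])
  calc #(Set.Iic ξ) ≤ #(Set.Iio ξ ∪ {ξ} : Set (OT lam)) := Cardinal.mk_le_mk_of_subset hsub
    _ ≤ #(Set.Iio ξ) + #({ξ} : Set (OT lam)) := Cardinal.mk_union_le _ _
    _ = #(Set.Iio ξ) + 1 := by rw [Cardinal.mk_singleton]
    _ < lam := Cardinal.add_lt_of_lt hlam.aleph0_le h1
        (lt_of_lt_of_le Cardinal.one_lt_aleph0 hlam.aleph0_le)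

lemma half {α : Type u} {m : Cardinal.{u}} (hm : ℵ₀ ≤ m) {B X Y : Set α}
    (hB : #B = m) (hsub : B ⊆ X ∪ Y) (hX : #X < m) (hY : #Y ≤ m) : #Y = m := by
  refine le_antisymm hY ?_
  by_contra h
  push_neg at h
  have hle : #B ≤ #X + #Y := (Cardinal.mk_le_mk_of_subset hsub).trans (Cardinal.mk_union_le _ _)
  rw [hB] at hle
  exact absurd (hle.trans_lt (Cardinal.add_lt_of_lt hm hX h)) (lt_irrefl _)

end Helpers


/-- downward positive relation below the splitting number. -/
theorem stmt1 (lam μ : Cardinal) (hlam : lam.IsRegular)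
    (h1 : lam < μ) (h2 : μ < splittingNumber lam) (hcf : μ.ord.cof ≠ lam) :
    StrongPolarized μ lam := by
  intro c
  have hlaminf : ℵ₀ ≤ lam := hlam.aleph0_le
  have hμinf : ℵ₀ ≤ μ := hlaminf.trans h1.le
  haveI : Nonempty (OT lam) := Ordinal.nonempty_toType_iff.mpr
    (by rw [Ne, Cardinal.ord_eq_zero]; exact hlam.pos.ne')
  -- the family of 1-color sections is not splitting
  have hFns : ¬ IsSplittingFamily lam (Set.range (fun α : OT μ => {β | c α β = 1})) := by
    intro hsp
    have hle : splittingNumber lam ≤ #(Set.range (fun α : OT μ => {β | c α β = 1})) :=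
      csInf_le' ⟨_, rfl, hsp⟩
    have h2' : #(Set.range (fun α : OT μ => {β | c α β = 1})) ≤ μ :=
      Cardinal.mk_range_le.trans (Cardinal.mk_ord_toType μ).le
    exact absurd (h2.trans_le (hle.trans h2')) (lt_irrefl _)
  rw [IsSplittingFamily] at hFns
  push_neg at hFns
  obtain ⟨B, hB, hnsplit⟩ := hFns
  -- color classes inside B
  set P : OT μ → Fin 2 → Set (OT lam) := fun α i => {β | β ∈ B ∧ c α β = i} with hPdef
  have hPle : ∀ α i, #(P α i) ≤ lam := by
    intro α i
    exact (Cardinal.mk_le_mk_of_subset (fun β h => h.1)).trans_eq hB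
  have key : ∀ α, ∃ i : Fin 2, #(P α (1 - i)) < lam := by
    intro α
    have hns := hnsplit _ (Set.mem_range_self α)
    rw [Splits] at hns
    have e1 : {β | c α β = 1} ∩ B = P α 1 := by
      ext β; simp only [Set.mem_inter_iff, Set.mem_setOf_eq, hPdef]; tauto
    have e0 : B \ {β | c α β = 1} = P α 0 := by
      ext β
      simp only [Set.mem_diff, Set.mem_setOf_eq, hPdef]
      constructor
      · rintro ⟨hb, hne⟩; exact ⟨hb, fin2_ne 1 _ hne⟩
      · rintro ⟨hb, h0⟩; refine ⟨hb, ?_⟩; rw [h0]; decide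
    rw [e1, e0] at hns
    rcases not_and_or.mp hns with h | h
    · exact ⟨0, by rw [show (1 - 0 : Fin 2) = 1 from rfl]; exact lt_of_le_of_ne (hPle α 1) h⟩
    · exact ⟨1, by rw [show (1 - 1 : Fin 2) = 0 from rfl]; exact lt_of_le_of_ne (hPle α 0) h⟩
  choose iA hiA using key
  -- bound for the exceptional sets
  choose g hg using fun α => bdd_of_mk_lt hlam (hiA α)
  -- majority color
  have hcolor : ∃ i' : Fin 2, #({α : OT μ | iA α = i'}) = μ := by
    have hY0 : #({α : OT μ | iA α = 0}) ≤ μ := (Cardinal.mk_set_le _).trans_eq (Cardinal.mk_ord_toType μ)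
    have hY1 : #({α : OT μ | iA α = 1}) ≤ μ := (Cardinal.mk_set_le _).trans_eq (Cardinal.mk_ord_toType μ)
    rcases lt_or_ge (#({α : OT μ | iA α = 0})) μ with h | h
    · refine ⟨1, half hμinf (B := (Set.univ : Set (OT μ))) ?_ ?_ h hY1⟩
      · rw [Cardinal.mk_univ]; exact Cardinal.mk_ord_toType μ
      · intro α _
        rcases fin2_cases (iA α) with h0 | h0
        · exact Or.inl h0
        · exact Or.inr h0
    · exact ⟨0, le_antisymm hY0 h⟩
  obtain ⟨i', hA⟩ := hcolor
  -- the increasing chain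
  set Aξ : OT lam → Set (OT μ) := fun ξ => {α | iA α = i' ∧ g α ≤ ξ} with hAξdef
  have hAle : ∀ ξ, #(Aξ ξ) ≤ μ := fun ξ => (Cardinal.mk_set_le _).trans_eq (Cardinal.mk_ord_toType μ)
  have hmono : ∀ {ξ ξ' : OT lam}, ξ ≤ ξ' → #(Aξ ξ) ≤ #(Aξ ξ') := fun h =>
    Cardinal.mk_le_mk_of_subset (fun α hα => ⟨hα.1, hα.2.trans h⟩)
  have claim : ∃ ξ, #(Aξ ξ) = μ := by
    by_contra hno
    push_neg at hno
    have hlt : ∀ ξ, #(Aξ ξ) < μ := fun ξ => lt_of_le_of_ne (hAle ξ) (hno ξ)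
    have hsle : (⨆ ξ, #(Aξ ξ)) ≤ μ := ciSup_le' hAle
    have hμles : μ ≤ lam * ⨆ ξ, #(Aξ ξ) := by
      have hcover : {α : OT μ | iA α = i'} ⊆ ⋃ ξ, Aξ ξ := fun α hα =>
        Set.mem_iUnion.mpr ⟨g α, hα, le_rfl⟩
      calc μ = #({α : OT μ | iA α = i'}) := hA.symm
        _ ≤ #(⋃ ξ, Aξ ξ) := Cardinal.mk_le_mk_of_subset hcover
        _ ≤ #(OT lam) * ⨆ ξ, #(Aξ ξ) := Cardinal.mk_iUnion_le _
        _ = lam * ⨆ ξ, #(Aξ ξ) := by rw [Cardinal.mk_ord_toType]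
    have hsmu : ¬ (⨆ ξ, #(Aξ ξ)) < μ := by
      intro hslt
      have hmax : lam * (⨆ ξ, #(Aξ ξ)) ≤ max lam (⨆ ξ, #(Aξ ξ)) := by
        calc lam * (⨆ ξ, #(Aξ ξ)) ≤ max lam (⨆ ξ, #(Aξ ξ)) * max lam (⨆ ξ, #(Aξ ξ)) :=
              mul_le_mul' (le_max_left _ _) (le_max_right _ _)
          _ = max lam (⨆ ξ, #(Aξ ξ)) := Cardinal.mul_eq_self (hlaminf.trans (le_max_left _ _))
      exact absurd (hμles.trans_lt (hmax.trans_lt (max_lt h1 hslt))) (lt_irrefl μ)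
    have hseq : (⨆ ξ, #(Aξ ξ)) = μ := le_antisymm hsle (not_lt.mp hsmu)
    rcases hcf.lt_or_gt with hc | hc
    · -- cof μ.ord < lam
      obtain ⟨ι, fo, hlsub, hι⟩ := Ordinal.exists_lsub_cof μ.ord
      have hcard : ∀ i, (fo i).card < μ := fun i =>
        Cardinal.lt_ord.mp (hlsub ▸ Ordinal.lt_lsub fo i)
      have hex : ∀ i : ι, ∃ ξ, (fo i).card < #(Aξ ξ) := fun i =>
        exists_lt_of_lt_ciSup (by rw [hseq]; exact hcard i)
      choose ξi hξi using hex
      have hrange : #(Set.range ξi) < lam :=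
        Cardinal.mk_range_le.trans_lt (by rw [hι]; exact hc)
      obtain ⟨ξs, hξs⟩ := bdd_of_mk_lt hlam hrange
      refine hno ξs (le_antisymm (hAle _) ?_)
      by_contra hlt2
      push_neg at hlt2
      have hord : (#(Aξ ξs)).ord < Ordinal.lsub fo := by
        rw [hlsub]; exact Cardinal.ord_lt_ord.mpr hlt2
      obtain ⟨i, hi⟩ := Ordinal.lt_lsub_iff.mp hord
      have hle2 : #(Aξ ξs) ≤ (fo i).card := by
        have := Ordinal.card_le_card hi
        rwa [Cardinal.card_ord] at this
      exact absurd (hle2.trans_lt ((hξi i).trans_le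
        (hmono (hξs _ (Set.mem_range_self i))))) (lt_irrefl _)
    · -- lam < cof μ.ord
      exact hsmu (Cardinal.iSup_lt_of_lt_cof_ord (by rw [Cardinal.mk_ord_toType]; exact hc) hlt)
  obtain ⟨ξs, hξs⟩ := claim
  refine ⟨Aξ ξs, {β | β ∈ B ∧ ¬ β ≤ ξs}, i', hξs, ?_, ?_⟩
  · -- the second coordinate set has size lam
    refine half hlaminf hB ?_ (mk_Iic_lt hlam ξs)
      ((Cardinal.mk_le_mk_of_subset (fun β h => h.1)).trans_eq hB)
    intro β hβ
    by_cases h : β ≤ ξs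
    · exact Or.inl h
    · exact Or.inr ⟨hβ, h⟩
  · rintro α ⟨hαA, hαg⟩ β ⟨hβB, hβ⟩
    by_contra hc2
    have hne : c α β = 1 - i' := fin2_ne i' _ hc2
    have hmem : β ∈ P α (1 - iA α) := ⟨hβB, by rw [hαA]; exact hne⟩
    exact hβ ((hg α β hmem).trans hαg)
end

section
/- If 𝔯 = ℵ₁ and 𝔰 = 2^{ℵ₀} = ℵ₂, then the strong polarized relation (θ, ℵ₀) → (θ, ℵ₀)^{1,1}_2 holds simultaneously for every cardinal θ with ℵ₁ ≤ θ ≤ 2^{ℵ₀}. -/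
open Cardinal Set

universe u v v1 v2 v3

lemma mkOT (c : Cardinal.{u}) : #(OT c) = c := mk_ord_toType c

instance : Countable (OT aleph0.{u}) := by
  rw [← mk_le_aleph0_iff, mkOT]

instance : Infinite (OT aleph0.{u}) := by
  rw [infinite_iff, mkOT]

lemma mk_eq_aleph0_of_infinite {B : Set (OT aleph0.{u})} (hB : B.Infinite) : #B = ℵ₀ := by
  have h1 : #B ≤ ℵ₀ := (mk_le_mk_of_subset (subset_univ B)).trans (by rw [mk_univ, mkOT])
  exact le_antisymm h1 (aleph0_le_mk_iff.mpr hB.to_subtype)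

lemma infinite_of_mk_eq_aleph0 {B : Set (OT aleph0.{u})} (hB : #B = ℵ₀) : B.Infinite := by
  rw [← infinite_coe_iff, ← aleph0_le_mk_iff, hB]

lemma splits_iff_infinite {S B : Set (OT aleph0.{u})} :
    Splits ℵ₀ S B ↔ (S ∩ B).Infinite ∧ (B \ S).Infinite := by
  constructor
  · rintro ⟨h1, h2⟩
    exact ⟨infinite_of_mk_eq_aleph0 h1, infinite_of_mk_eq_aleph0 h2⟩
  · rintro ⟨h1, h2⟩
    exact ⟨mk_eq_aleph0_of_infinite h1, mk_eq_aleph0_of_infinite h2⟩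

lemma splits_image (e : OT aleph0.{v} ≃ OT aleph0.{u}) {S B : Set (OT aleph0.{v})} :
    Splits ℵ₀ (e '' S) (e '' B) ↔ Splits ℵ₀ S B := by
  rw [splits_iff_infinite, splits_iff_infinite, ← Set.image_inter e.injective,
    ← Set.image_diff e.injective, Set.infinite_image_iff e.injective.injOn,
    Set.infinite_image_iff e.injective.injOn]

lemma CH2_transfer (hc : (2 : Cardinal.{v}) ^ aleph0.{v} = aleph 2) :
    (2 : Cardinal.{u}) ^ aleph0.{u} = aleph 2 := by
  have h2 := congrArg lift.{u} hc
  rw [lift_power, lift_aleph0, lift_ofNat, lift_aleph, Ordinal.lift_ofNat] at h2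
  have h3 : lift.{v} ((2 : Cardinal.{u}) ^ aleph0.{u}) = lift.{v} (aleph.{u} 2) := by
    rw [lift_power, lift_aleph0, lift_ofNat, lift_aleph, Ordinal.lift_ofNat]
    exact h2
  exact lift_inj.mp h3

/-- Transfer: there is no splitting family of size `≤ ℵ₁` (in any universe). -/
lemma no_small_splitting (e : OT aleph0.{v} ≃ OT aleph0.{u})
    (hs : splittingNumber.{v} ℵ₀ = 2 ^ ℵ₀) (hc : (2 : Cardinal.{v}) ^ ℵ₀ = aleph 2)
    (F : Set (Set (OT aleph0.{u}))) (hF : #F ≤ aleph 1) : ¬ IsSplittingFamily ℵ₀ F := by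
  intro hsf
  set G : Set (Set (OT aleph0.{v})) := (fun S => e.symm '' S) '' F with hG
  have hGsf : IsSplittingFamily ℵ₀ G := by
    intro B hB
    have hB' : #(↥(e '' B)) = ℵ₀ :=
      mk_eq_aleph0_of_infinite ((infinite_of_mk_eq_aleph0 hB).image e.injective.injOn)
    obtain ⟨S, hSF, hSsp⟩ := hsf (e '' B) hB'
    refine ⟨e.symm '' S, ⟨S, hSF, rfl⟩, ?_⟩
    rw [← splits_image e]
    have : e '' (e.symm '' S) = S := by
      rw [Set.image_image]; simp
    rw [this]
    exact hSsp
  have hle : splittingNumber.{v} ℵ₀ ≤ #G := csInf_le' ⟨G, rfl, hGsf⟩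
  have hGF : lift.{u} #G ≤ lift.{v} #F := by
    have hinj : Function.Injective (fun S : Set (OT aleph0.{u}) => e.symm '' S) :=
      Set.image_injective.mpr e.symm.injective
    rw [hG, mk_image_eq_of_injOn_lift _ _ hinj.injOn]
  have h1 : lift.{u} (splittingNumber.{v} ℵ₀) ≤ lift.{v} (aleph.{u} 1) :=
    (lift_le.mpr hle).trans (hGF.trans (lift_le.mpr hF))
  rw [hs, hc] at h1
  rw [lift_aleph, lift_aleph] at h1
  have h2 : (Ordinal.lift.{v} (1 : Ordinal.{u})) < (Ordinal.lift.{u} (2 : Ordinal.{v})) := by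
    simp
  exact absurd h1 (not_le.mpr (aleph_lt_aleph.mpr h2))

/-- Transfer: there is an unreaped family of size `< ℵ₂` (in any universe). -/
lemma exists_unreaped (e : OT aleph0.{v} ≃ OT aleph0.{u})
    (hr : reapingNumber.{v} ℵ₀ = aleph 1) :
    ∃ F : Set (Set (OT aleph0.{u})), #F < aleph 2 ∧ IsUnreaped ℵ₀ F := by
  have hne : {κ | ∃ F : Set (Set (OT aleph0.{v})), #F = κ ∧ IsUnreaped ℵ₀ F}.Nonempty := by
    by_contra h
    rw [Set.not_nonempty_iff_eq_empty] at h
    rw [reapingNumber, h, Cardinal.sInf_empty] at hr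
    exact (aleph_pos 1).ne' hr.symm
  obtain ⟨F, hFcard, hFun⟩ := csInf_mem hne
  rw [show sInf {κ | ∃ F : Set (Set (OT aleph0.{v})), #F = κ ∧ IsUnreaped ℵ₀ F}
      = reapingNumber ℵ₀ from rfl, hr] at hFcard
  refine ⟨(fun S => e '' S) '' F, ?_, ?_, ?_⟩
  · have hinj : Function.Injective (fun S : Set (OT aleph0.{v}) => e '' S) :=
      Set.image_injective.mpr e.injective
    rw [← lift_lt.{u, v}]
    have h1 : lift.{v} #((fun S => e '' S) '' F) = lift.{u} #F :=
      mk_image_eq_of_injOn_lift _ _ hinj.injOn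
    rw [h1, hFcard, lift_aleph, lift_aleph]
    refine aleph_lt_aleph.mpr ?_
    simp
  · rintro A ⟨S, hS, rfl⟩
    exact mk_eq_aleph0_of_infinite
      ((infinite_of_mk_eq_aleph0 (hFun.1 S hS)).image e.injective.injOn)
  · rintro ⟨S', hS'card, hS'⟩
    refine hFun.2 ⟨e.symm '' S', ?_, ?_⟩
    · exact mk_eq_aleph0_of_infinite
        ((infinite_of_mk_eq_aleph0 hS'card).image e.symm.injective.injOn)
    · intro A hA
      have h1 := hS' (e '' A) ⟨A, hA, rfl⟩
      rw [← splits_image e]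
      have : e '' (e.symm '' S') = S' := by
        rw [Set.image_image]; simp
      rw [this]
      exact h1

lemma lemA {θ : Cardinal.{u}} (hreg : θ.IsRegular) (hθ : ℵ₀ < θ)
    (c : OT θ → OT aleph0.{u} → Fin 2) (B : Set (OT aleph0.{u})) (hB : B.Infinite)
    (D : Set (OT θ)) (hD : θ ≤ #D)
    (h : ∀ α ∈ D, ¬ Splits ℵ₀ {m | c α m = 0} B) :
    ∃ (A : Set (OT θ)) (B' : Set (OT aleph0.{u})) (i : Fin 2),
      #A = θ ∧ #B' = ℵ₀ ∧ ∀ α ∈ A, ∀ β ∈ B', c α β = i := by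
  classical
  have key : ∀ α, ∃ p : Fin 2 × Finset (OT ℵ₀),
      α ∈ D → ∀ m ∈ B, m ∉ p.2 → c α m = p.1 := by
    intro α
    by_cases hα : α ∈ D
    · have hns := h α hα
      rw [Splits] at hns
      rcases not_and_or.mp hns with h1 | h1
      · have hfin : ({m | c α m = 0} ∩ B).Finite := by
          by_contra hinf
          exact h1 (mk_eq_aleph0_of_infinite hinf)
        refine ⟨(1, hfin.toFinset), fun _ m hm hm2 => ?_⟩
        simp only [Set.Finite.mem_toFinset, Set.mem_inter_iff, Set.mem_setOf_eq] at hm2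
        have : ¬ c α m = 0 := fun h0 => hm2 ⟨h0, hm⟩
        exact Fin.eq_one_of_ne_zero _ this
      · have hfin : (B \ {m | c α m = 0}).Finite := by
          by_contra hinf
          exact h1 (mk_eq_aleph0_of_infinite hinf)
        refine ⟨(0, hfin.toFinset), fun _ m hm hm2 => ?_⟩
        simp only [Set.Finite.mem_toFinset, Set.mem_diff, Set.mem_setOf_eq] at hm2
        by_contra h0
        exact hm2 ⟨hm, h0⟩
    · exact ⟨(0, ∅), fun hα' => absurd hα' hα⟩
  choose f hf using key
  set A : (Fin 2 × Finset (OT ℵ₀)) → Set (OT θ) := fun p => {α ∈ D | f α = p} with hA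
  have hsub : D ⊆ ⋃ p, A p := fun α hα => Set.mem_iUnion.mpr ⟨f α, hα, rfl⟩
  have hex : ∃ p, θ ≤ #(A p) := by
    by_contra hno
    push_neg at hno
    have hι : #(Fin 2 × Finset (OT aleph0.{u})) < θ :=
      lt_of_le_of_lt (mk_le_aleph0) hθ
    have : #(⋃ p, A p) < θ := by
      refine lt_of_le_of_lt (mk_iUnion_le A) ?_
      exact mul_lt_of_lt hreg.aleph0_le hι (iSup_lt_of_isRegular hreg hι fun p => hno p)
    exact absurd (hD.trans (mk_le_mk_of_subset hsub)) (not_le.mpr this)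
  obtain ⟨⟨i, b⟩, hb⟩ := hex
  refine ⟨A (i, b), B \ ↑b, i, ?_, ?_, ?_⟩
  · refine le_antisymm ?_ hb
    calc #(A (i, b)) ≤ #(OT θ) := (mk_le_mk_of_subset (subset_univ _)).trans (by rw [mk_univ])
    _ = θ := mkOT θ
  · exact mk_eq_aleph0_of_infinite (hB.diff b.finite_toSet)
  · rintro α ⟨hαD, hαf⟩ β ⟨hβB, hβb⟩
    have := hf α hαD β hβB
    rw [hαf] at this
    exact this hβb

lemma master (hr : reapingNumber.{v1} ℵ₀ = aleph 1)
    (hs : splittingNumber.{v2} ℵ₀ = 2 ^ ℵ₀) (hc : (2 : Cardinal.{v3}) ^ aleph0.{v3} = aleph 2)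
    (θ : Cardinal.{u}) (h1 : aleph 1 ≤ θ) (h2 : θ ≤ 2 ^ aleph0.{u}) :
    StrongPolarized θ aleph0.{u} := by
  obtain ⟨e1⟩ : Nonempty (OT aleph0.{v2} ≃ OT aleph0.{u}) := nonempty_equiv_of_countable
  obtain ⟨e2⟩ : Nonempty (OT aleph0.{v1} ≃ OT aleph0.{u}) := nonempty_equiv_of_countable
  rw [CH2_transfer.{u, v3} hc] at h2
  have hθ : θ = aleph 1 ∨ θ = aleph 2 := by
    rcases eq_or_lt_of_le h2 with h | h
    · right; exact h
    · left
      refine le_antisymm ?_ h1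
      have h2s : aleph (2 : Ordinal) = Order.succ (aleph 1) := by
        rw [← Ordinal.succ_one, aleph_succ]
      rw [h2s] at h
      exact Order.lt_succ_iff.mp h
  obtain rfl | rfl := hθ
  · -- case θ = ℵ₁ : use 𝔰 > ℵ₁
    intro c
    set x : OT (aleph 1) → Set (OT aleph0.{u}) := fun α => {m | c α m = 0} with hx
    have hnsf : ¬ IsSplittingFamily ℵ₀ (Set.range x) :=
      no_small_splitting e1 hs (CH2_transfer.{v2, v3} hc) (Set.range x)
        (mk_range_le.trans (by rw [mkOT]))
    rw [IsSplittingFamily] at hnsf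
    push_neg at hnsf
    obtain ⟨B, hBcard, hBns⟩ := hnsf
    exact lemA isRegular_aleph_one aleph0_lt_aleph_one c B (infinite_of_mk_eq_aleph0 hBcard)
      Set.univ (by rw [mk_univ, mkOT]) (fun α _ => hBns (x α) ⟨α, rfl⟩)
  · -- case θ = ℵ₂ : use 𝔯 = ℵ₁ < ℵ₂
    have hreg2 : (aleph.{u} 2).IsRegular := by
      rw [show (2 : Ordinal) = Order.succ 1 from Ordinal.succ_one.symm]
      exact isRegular_aleph_succ 1
    have h02 : aleph0.{u} < aleph 2 := aleph0_lt_aleph_one.trans (aleph_lt_aleph.mpr one_lt_two)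
    intro c
    set x : OT (aleph.{u} 2) → Set (OT aleph0.{u}) := fun α => {m | c α m = 0} with hx
    obtain ⟨F, hFcard, hFun⟩ := exists_unreaped e2 hr
    set AB : Set (OT aleph0.{u}) → Set (OT (aleph.{u} 2)) :=
      fun B => {α | ¬ Splits ℵ₀ (x α) B} with hAB
    by_cases hex : ∃ B ∈ F, aleph 2 ≤ #(AB B)
    · obtain ⟨B, hBF, hBcard⟩ := hex
      exact lemA hreg2 h02 c B (infinite_of_mk_eq_aleph0 (hFun.1 B hBF)) (AB B) hBcard
        (fun α hα => hα)
    · push_neg at hex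
      have hU : #(⋃ B : ↥F, AB ↑B) < aleph 2 := by
        refine lt_of_le_of_lt (mk_iUnion_le _) ?_
        have hι : #(↥F) < aleph 2 := hFcard
        exact mul_lt_of_lt hreg2.aleph0_le hι
          (iSup_lt_of_isRegular hreg2 hι fun B => hex ↑B B.2)
      have hne2 : (⋃ B : ↥F, AB ↑B) ≠ Set.univ := by
        intro h
        rw [h, mk_univ, mkOT] at hU
        exact lt_irrefl _ hU
      obtain ⟨α, hα⟩ := (Set.ne_univ_iff_exists_notMem _).mp hne2
      have hsp : ∀ B ∈ F, Splits ℵ₀ (x α) B := by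
        intro B hBF
        by_contra hns
        exact hα (Set.mem_iUnion.mpr ⟨⟨B, hBF⟩, hns⟩)
      have hFne : F.Nonempty := by
        rcases Set.eq_empty_or_nonempty F with rfl | h
        · exact absurd ⟨Set.univ, by rw [mk_univ, mkOT], by simp⟩ hFun.2
        · exact h
      obtain ⟨B0, hB0⟩ := hFne
      have hScard : #(x α) = ℵ₀ := by
        refine mk_eq_aleph0_of_infinite ?_
        exact (infinite_of_mk_eq_aleph0 (hsp B0 hB0).1).mono Set.inter_subset_left
      exact absurd ⟨x α, hScard, hsp⟩ hFun.2

lemma SP_transfer (θ : Cardinal.{u}) (h : StrongPolarized θ aleph0.{u}) :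
    StrongPolarized θ aleph0.{v} := by
  intro c
  obtain ⟨e⟩ : Nonempty (OT aleph0.{u} ≃ OT aleph0.{v}) := nonempty_equiv_of_countable
  obtain ⟨A, B, i, hA, hB, hmono⟩ := h (fun α m => c α (e m))
  refine ⟨A, e '' B, i, hA,
    mk_eq_aleph0_of_infinite ((infinite_of_mk_eq_aleph0 hB).image e.injective.injOn), ?_⟩
  rintro α hα β ⟨m, hm, rfl⟩
  exact hmono α hα m hm

/-- if `𝔯 = ℵ₁` and `𝔰 = 2^ℵ₀ = ℵ₂`, then the strong polarized relation
holds simultaneously for every `θ ∈ [ℵ₁, 2^ℵ₀]`. -/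
theorem stmt5
    (hr : reapingNumber ℵ₀ = aleph 1)
    (hs : splittingNumber ℵ₀ = 2 ^ ℵ₀) (hc : 2 ^ ℵ₀ = aleph 2) :
    ∀ θ : Cardinal, aleph 1 ≤ θ → θ ≤ 2 ^ ℵ₀ → StrongPolarized θ ℵ₀ := by
  intro θ h1 h2
  exact SP_transfer θ (master hr hs hc θ h1 h2)
end

section
/- Assume the Continuum Hypothesis. Then there exists a coloring c : ω₁ × ω → 2 such that for every uncountable A ⊆ ω₁ and every infinite B ⊆ ω, c is not constant on A × B; that is, (ℵ₁, ℵ₀) ↛ (ℵ₁, ℵ₀)^{1,1}_2. -/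
open Cardinal Set

noncomputable section AuxStmt6

lemma exists_two_gt {s : Set ℕ} (hs : s.Infinite) (N : ℕ) :
    ∃ a b, a ∈ s ∧ b ∈ s ∧ N < a ∧ N < b ∧ a ≠ b := by
  obtain ⟨a, ha, hNa⟩ := hs.exists_gt N
  obtain ⟨b, hb, hab⟩ := hs.exists_gt a
  exact ⟨a, b, ha, hb, hNa, hNa.trans hab, hab.ne⟩

lemma exists_splitter (g : ℕ → Set ℕ) (hg : ∀ i, (g i).Infinite) :
    ∃ f : ℕ → Fin 2, ∀ i, (∃ m ∈ g i, f m = 0) ∧ (∃ m ∈ g i, f m = 1) := by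
  choose a b ha hb hNa hNb hab using fun i N => exists_two_gt (hg i) N
  set p : ℕ → ℕ × ℕ := fun i =>
    Nat.rec (⟨a 0 0, b 0 0⟩) (fun n ih => ⟨a (n+1) (max ih.1 ih.2), b (n+1) (max ih.1 ih.2)⟩) i
    with hp
  set x : ℕ → ℕ := fun i => (p i).1 with hxdef
  set y : ℕ → ℕ := fun i => (p i).2 with hydef
  set m : ℕ → ℕ := fun i => max (x i) (y i) with hmdef
  have hx : ∀ i, x i ∈ g i := by
    intro i; cases i with
    | zero => exact ha 0 0
    | succ n => exact ha (n+1) _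
  have hy : ∀ i, y i ∈ g i := by
    intro i; cases i with
    | zero => exact hb 0 0
    | succ n => exact hb (n+1) _
  have hne : ∀ i, x i ≠ y i := by
    intro i; cases i with
    | zero => exact hab 0 0
    | succ n => exact hab (n+1) _
  have hstepx : ∀ i, m i < x (i+1) := fun i => hNa (i+1) (m i)
  have hstepy : ∀ i, m i < y (i+1) := fun i => hNb (i+1) (m i)
  have hmono : StrictMono m := strictMono_nat_of_lt_succ fun i =>
    lt_max_iff.2 (Or.inl (hstepx i))
  have hxy : ∀ i j, y i ≠ x j := by
    intro i j
    rcases lt_trichotomy i j with h | rfl | h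
    · obtain ⟨k, rfl⟩ := Nat.exists_eq_add_of_lt h
      have : y i ≤ m i := le_max_right _ _
      have h2 : m i ≤ m (i + k) := hmono.monotone (Nat.le_add_right _ _)
      have h3 : m (i + k) < x (i + k + 1) := hstepx (i + k)
      omega
    · exact (hne i).symm
    · obtain ⟨k, rfl⟩ := Nat.exists_eq_add_of_lt h
      have : x j ≤ m j := le_max_left _ _
      have h2 : m j ≤ m (j + k) := hmono.monotone (Nat.le_add_right _ _)
      have h3 : m (j + k) < y (j + k + 1) := hstepy (j + k)
      omega
  classical
  refine ⟨fun n => if n ∈ Set.range x then 0 else 1, fun i => ⟨⟨x i, hx i, ?_⟩, ⟨y i, hy i, ?_⟩⟩⟩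
  · simp [Set.mem_range_self]
  · have : y i ∉ Set.range x := by
      rintro ⟨j, hj⟩; exact hxy i j hj.symm
    simp [this]

universe u v

lemma countable_Iic_OT (α : OT (aleph 1 : Cardinal.{u})) : (Set.Iic α).Countable := by
  have h1 : #(Set.Iio α) < aleph 1 := Cardinal.mk_Iio_ord_toType α
  have h2 : (Set.Iio α).Countable := (countable_iff_lt_aleph_one _).2 h1
  have : Set.Iic α = insert α (Set.Iio α) := by
    ext β; simp [le_iff_lt_or_eq, or_comm, eq_comm]
  rw [this]
  exact h2.insert α

lemma CH_iff_zero :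
    (2 ^ (ℵ₀ : Cardinal.{u}) = aleph 1) ↔ (2 ^ (ℵ₀ : Cardinal.{0}) = aleph 1) := by
  have h1 : Cardinal.lift.{u,0} (2 ^ (ℵ₀ : Cardinal.{0})) = 2 ^ (ℵ₀ : Cardinal.{u}) := by
    rw [Cardinal.lift_power, Cardinal.lift_two, Cardinal.lift_aleph0]
  have h2 : Cardinal.lift.{u,0} (aleph 1 : Cardinal.{0}) = aleph 1 := by
    rw [Cardinal.lift_aleph]; norm_num
  rw [← h1, ← h2, Cardinal.lift_inj]

lemma CH_transfer (h : 2 ^ (ℵ₀ : Cardinal.{u}) = aleph 1) :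
    2 ^ (ℵ₀ : Cardinal.{v}) = aleph 1 := by
  exact (CH_iff_zero.{v}).2 ((CH_iff_zero.{u}).1 h)

theorem stmt6' (hCH : 2 ^ (ℵ₀ : Cardinal.{u}) = Cardinal.aleph 1) :
    ∃ c : OT (aleph 1 : Cardinal.{u}) → ℕ → Fin 2,
      ∀ (A : Set (OT (aleph 1 : Cardinal.{u}))) (B : Set ℕ), #A = aleph 1 → B.Infinite →
        ¬ ∃ i : Fin 2, ∀ α ∈ A, ∀ n ∈ B, c α n = i := by
  classical
  have hemb : Nonempty ({B : Set ℕ // B.Infinite} ↪ OT (aleph 1 : Cardinal.{u})) := by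
    apply Cardinal.lift_mk_le'.1
    rw [Cardinal.mk_toType, Cardinal.card_ord]
    calc Cardinal.lift.{u} #{B : Set ℕ // B.Infinite}
        ≤ Cardinal.lift.{u} #(Set ℕ) := Cardinal.lift_le.2 (Cardinal.mk_subtype_le _)
      _ = 2 ^ (ℵ₀ : Cardinal.{u}) := by
          rw [Cardinal.mk_set, Cardinal.mk_nat, Cardinal.lift_power, Cardinal.lift_two,
            Cardinal.lift_aleph0]
      _ = aleph 1 := hCH
      _ = Cardinal.lift.{0} (aleph 1 : Cardinal.{u}) := by simp
  obtain ⟨emb⟩ := hemb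
  have hneB : Nonempty {B : Set ℕ // B.Infinite} := ⟨⟨Set.univ, Set.infinite_univ⟩⟩
  set e : OT (aleph 1 : Cardinal.{u}) → {B : Set ℕ // B.Infinite} := Function.invFun emb with he
  have hesurj : Function.Surjective e := Function.invFun_surjective emb.injective
  have key : ∀ α : OT (aleph 1 : Cardinal.{u}), ∃ f : ℕ → Fin 2,
      ∀ β ≤ α, (∃ m ∈ (e β).1, f m = 0) ∧ (∃ m ∈ (e β).1, f m = 1) := by
    intro α
    have hcnt : Countable (Set.Iic α) := (countable_Iic_OT α).to_subtype
    have hne2 : Nonempty (Set.Iic α) := ⟨⟨α, le_refl α⟩⟩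
    obtain ⟨h, hh⟩ := exists_surjective_nat (Set.Iic α)
    obtain ⟨f, hf⟩ := exists_splitter (fun n => (e (h n).1).1) (fun n => (e (h n).1).2)
    refine ⟨f, fun β hβ => ?_⟩
    obtain ⟨n, hn⟩ := hh ⟨β, hβ⟩
    have hnb : ((h n) : OT (aleph 1 : Cardinal.{u})) = β := by rw [hn]
    rw [← hnb]
    exact hf n
  choose c hc using key
  refine ⟨c, fun A B hA hB ⟨i, hi⟩ => ?_⟩
  obtain ⟨β, hβ⟩ := hesurj ⟨B, hB⟩
  have hAB : ∃ α ∈ A, β ≤ α := by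
    by_contra h
    push_neg at h
    have hsub : A ⊆ Set.Iio β := fun α hα => h α hα
    have hle : #A ≤ #(Set.Iio β) := Cardinal.mk_le_mk_of_subset hsub
    exact absurd hA (ne_of_lt (lt_of_le_of_lt hle (Cardinal.mk_Iio_ord_toType β)))
  obtain ⟨α, hαA, hβα⟩ := hAB
  obtain ⟨⟨m0, hm0B, hm00⟩, ⟨m1, hm1B, hm11⟩⟩ := hc α β hβα
  rw [hβ] at hm0B hm1B
  have h0 : c α m0 = i := hi α hαA m0 hm0B
  have h1 : c α m1 = i := hi α hαA m1 hm1B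
  rw [hm00] at h0; rw [hm11] at h1
  exact absurd (h0.trans h1.symm) (by decide)

end AuxStmt6

/-- under CH there is a coloring of `ω₁ × ω` with no monochromatic
rectangle `A × B`, `A` uncountable, `B` infinite. -/
theorem stmt6 (hCH : 2 ^ ℵ₀ = aleph 1) :
    ∃ c : OT (aleph 1) → ℕ → Fin 2,
      ∀ (A : Set (OT (aleph 1))) (B : Set ℕ), #A = aleph 1 → B.Infinite →
        ¬ ∃ i : Fin 2, ∀ α ∈ A, ∀ n ∈ B, c α n = i := by
  exact stmt6' (CH_transfer hCH)
end
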